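/- (Strictly delocalized regime, constrained case.) For every 0 < δ < 1, Z^c_{δ,N} ~ (δ c_q/(1−δ)^2) · L(N)/N^{3/2} as N → ∞. -/

import Mathlib

open Filter Finset

/-- The `k`-fold convolution of `q : ℕ → ℝ` with itself. -/
noncomputable def convPow (q : ℕ → ℝ) : ℕ → ℕ → ℝ
  | 0, n => if n = 0 then 1 else 0
  | k + 1, n => ∑ i ∈ Finset.range (n + 1), convPow q k i * q (n - i)

/-- `L : ℕ → ℝ` is slowly varying at infinity: `L(⌊cn⌋)/L(n) → 1` for every `c > 0`. -/
def SlowlyVaryingNat (L : ℕ → ℝ) : Prop :=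
  ∀ c : ℝ, 0 < c → Tendsto (fun n : ℕ => L ⌊c * (n : ℝ)⌋₊ / L n) atTop (nhds 1)

/-- The (modified) constrained partition function `Z^c_{δ,N} = ∑_{k=0}^{N} δ^k q^{k*}(N)`. -/
noncomputable def Zc (q : ℕ → ℝ) (δ : ℝ) (N : ℕ) : ℝ :=
  ∑ k ∈ Finset.range (N + 1), δ ^ k * convPow q k N

noncomputable def ZK (q : ℕ → ℝ) (δ : ℝ) (K n : ℕ) : ℝ :=
  ∑ k ∈ Finset.range (K + 1), δ ^ k * convPow q k n

abbrev HQA (L : ℕ → ℝ) (c_q : ℝ) (q : ℕ → ℝ) : Prop :=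
  Tendsto (fun n : ℕ => (n : ℝ) ^ ((3 : ℝ) / 2) * q n / L n) atTop (nhds c_q)

lemma window (L : ℕ → ℝ) (hL : SlowlyVaryingNat L) {ε : ℝ} (hε : 0 < ε) :
    ∃ a b : ℝ, 0 < a ∧ a < b ∧ ∃ n₀ : ℕ, ∀ N ≥ n₀, ∀ t : ℝ, a < t → t < b →
      |L ⌊t * (N : ℝ)⌋₊ / L N - 1| ≤ ε := by
  classical
  set F : ℕ → Set ℝ := fun n =>
    {s | ∀ N ≥ n, |L ⌊Real.exp s * (N : ℝ)⌋₊ / L N - 1| ≤ ε} with hF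
  have hcov : (⋃ n, closure (F n)) = Set.univ := by
    apply Set.eq_univ_of_forall
    intro s
    have h := hL (Real.exp s) (Real.exp_pos s)
    have h2 : ∀ᶠ N : ℕ in atTop, |L ⌊Real.exp s * (N : ℝ)⌋₊ / L N - 1| ≤ ε := by
      exact h.eventually (Metric.eventually_nhds_iff_ball.mpr
        ⟨ε, hε, fun y hy => le_of_lt (by simpa [Real.dist_eq] using hy)⟩)
    obtain ⟨n, hn⟩ := eventually_atTop.mp h2
    exact Set.mem_iUnion.mpr ⟨n, subset_closure hn⟩
  obtain ⟨n₀, x₀, hx₀⟩ := nonempty_interior_of_iUnion_of_closed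
    (fun n => isClosed_closure) hcov
  rw [mem_interior_iff_mem_nhds, Metric.mem_nhds_iff] at hx₀
  obtain ⟨r, hr, hball⟩ := hx₀
  refine ⟨Real.exp (x₀ - r/2), Real.exp (x₀ + r/2), Real.exp_pos _,
    Real.exp_lt_exp.mpr (by linarith), max n₀ 1, ?_⟩
  intro N hN t hat htb
  have hN1 : (1 : ℕ) ≤ N := le_trans (le_max_right _ _) hN
  have hNpos : (0:ℝ) < N := by exact_mod_cast hN1
  have ht0 : 0 < t := lt_trans (Real.exp_pos _) hat
  set j := ⌊t * (N : ℝ)⌋₊ with hj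
  -- t < (j+1)/N
  have hjt : t * N < (j : ℝ) + 1 := Nat.lt_floor_add_one _
  have htj1 : t < ((j : ℝ) + 1) / N := by
    rw [lt_div_iff₀ hNpos]; exact hjt
  -- the open interval I
  set m := min (Real.exp (x₀ + r/2)) (((j:ℝ)+1)/N) with hm
  have htm : t < m := lt_min htb htj1
  -- find t' in F n₀ within (t, m)
  have hIsub : Set.Ioo (Real.log t) (Real.log m) ⊆ Metric.ball x₀ r := by
    intro s hs
    have h1 : x₀ - r/2 < s := by
      have hlt : x₀ - r/2 < Real.log t := (Real.lt_log_iff_exp_lt ht0).mpr hat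
      linarith [hs.1]
    have h2 : s < x₀ + r/2 := by
      have hm0 : 0 < m := lt_trans ht0 htm
      have : Real.log m ≤ x₀ + r/2 := by
        calc Real.log m ≤ Real.log (Real.exp (x₀ + r/2)) :=
              Real.log_le_log hm0 (min_le_left _ _)
          _ = x₀ + r/2 := Real.log_exp _
      linarith [hs.2]
    rw [Metric.mem_ball, Real.dist_eq, abs_lt]; constructor <;> linarith
  have hlog : Real.log t < Real.log m := Real.log_lt_log ht0 htm
  have hmem : Real.log t + (Real.log m - Real.log t)/2 ∈ Set.Ioo (Real.log t) (Real.log m) := by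
    constructor <;> [linarith; linarith]
  have hcl : Real.log t + (Real.log m - Real.log t)/2 ∈ closure (F n₀) :=
    hball (hIsub hmem)
  obtain ⟨s', hs'I, hs'F⟩ := (mem_closure_iff.mp hcl) (Set.Ioo (Real.log t) (Real.log m))
    isOpen_Ioo hmem
  set t' := Real.exp s' with ht'
  have ht'I : t < t' ∧ t' < m := by
    constructor
    · have := Real.exp_lt_exp.mpr hs'I.1; rwa [Real.exp_log ht0] at this
    · have := Real.exp_lt_exp.mpr hs'I.2
      rwa [Real.exp_log (lt_trans ht0 htm)] at this
  have hfloor : ⌊t' * (N:ℝ)⌋₊ = j := by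
    have h1 : (j : ℝ) ≤ t' * N := le_trans (Nat.floor_le (by positivity)) (by nlinarith [ht'I.1])
    have h2 : t' * N < (j:ℝ) + 1 := by
      have : t' < ((j:ℝ)+1)/N := lt_of_lt_of_le ht'I.2 (min_le_right _ _)
      calc t' * N < (((j:ℝ)+1)/N) * N := by nlinarith
        _ = (j:ℝ)+1 := by field_simp
    rw [Nat.floor_eq_iff (by positivity)]
    exact ⟨by exact_mod_cast h1, h2⟩
  have := hs'F N (le_trans (le_max_left _ _) hN)
  have hfl' : ⌊Real.exp s' * (N:ℝ)⌋₊ = j := hfloor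
  rw [hfl'] at this; exact this


lemma translateWin (L : ℕ → ℝ) (hLpos : ∀ n, 0 < L n) (hL : SlowlyVaryingNat L)
    {ε a b : ℝ} (hε : 0 < ε) (ha : 0 < a) (hab : a < b) (n₀ : ℕ)
    (hwin : ∀ N ≥ n₀, ∀ t : ℝ, a < t → t < b → |L ⌊t * (N : ℝ)⌋₊ / L N - 1| ≤ ε)
    {c : ℝ} (hc : 0 < c) :
    ∀ᶠ N : ℕ in atTop, ∀ j : ℕ,
      c * (a + (b-a)/3) * N ≤ j → (j : ℝ) ≤ c * (b - (b-a)/3) * N →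
      |L j / L N - 1| ≤ 2*ε + ε^2 := by
  set a' := a + (b-a)/3 with ha'def
  set b' := b - (b-a)/3 with hb'def
  have haa' : a < a' := by rw [ha'def]; linarith
  have hbb' : b' < b := by rw [hb'def]; linarith
  have ha'0 : 0 < a' := lt_trans ha haa'
  have hNR : Tendsto (fun N : ℕ => c * (N:ℝ)) atTop atTop :=
    (tendsto_natCast_atTop_atTop (R := ℝ)).const_mul_atTop hc
  have hptw : ∀ᶠ N : ℕ in atTop, |L ⌊c * (N : ℝ)⌋₊ / L N - 1| ≤ ε :=
    (hL c hc).eventually (Metric.eventually_nhds_iff_ball.mpr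
      ⟨ε, hε, fun y hy => le_of_lt (by simpa [Real.dist_eq] using hy)⟩)
  have h1 : ∀ᶠ N : ℕ in atTop, b + 1/2 ≤ c * (b - b') * (N:ℝ) := by
    have := ((tendsto_natCast_atTop_atTop (R := ℝ)).const_mul_atTop
      (mul_pos hc (show (0:ℝ) < b - b' by linarith))).eventually_ge_atTop (b + 1/2)
    filter_upwards [this] with N hN using by linarith [hN, mul_assoc c (b-b') (N:ℝ)] 
  have h2 : ∀ᶠ N : ℕ in atTop, (n₀:ℝ) + 1 ≤ c * (N:ℝ) :=
    hNR.eventually_ge_atTop _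
  have h3 : ∀ᶠ N : ℕ in atTop, (2:ℝ) ≤ c * (N:ℝ) := hNR.eventually_ge_atTop _
  filter_upwards [hptw, h1, h2, h3] with N hptN hN1 hN2 hN3
  intro j hj1 hj2
  set M := ⌊c * (N : ℝ)⌋₊ with hMdef
  have hMle : (M : ℝ) ≤ c * N := Nat.floor_le (by positivity)
  have hMgt : c * N - 1 < (M:ℝ) := by
    have := Nat.lt_floor_add_one (c * (N:ℝ)); linarith
  have hM0 : (0:ℝ) < M := by linarith
  have hMn0 : n₀ ≤ M := by
    have : (n₀:ℝ) < (M:ℝ) := by linarith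
    exact_mod_cast le_of_lt this
  set u := ((j:ℝ) + 1/2) / M with hudef
  have hua : a < u := by
    have h4 : a' * M ≤ a' * (c * N) := by nlinarith
    have : a * M < (j:ℝ) + 1/2 := by nlinarith
    rw [hudef, lt_div_iff₀ hM0]; linarith
  have hub : u < b := by
    have hb0 : (0:ℝ) < b := lt_trans ha hab
    have hkey : c * b' * N + 1/2 ≤ b * (c * N - 1) := by nlinarith
    have hblt : b * (c * N - 1) < b * M := mul_lt_mul_of_pos_left hMgt hb0
    have hstep : (j:ℝ) + 1/2 ≤ c * b' * N + 1/2 := by linarith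
    have hle : (j:ℝ) + 1/2 ≤ b * (c * N - 1) := le_trans hstep hkey
    have : (j:ℝ) + 1/2 < b * M := lt_of_le_of_lt hle hblt
    rw [hudef, div_lt_iff₀ hM0]; linarith
  have hfloor : ⌊u * (M:ℝ)⌋₊ = j := by
    have huM : u * (M:ℝ) = (j:ℝ) + 1/2 := by
      rw [hudef]; field_simp
    rw [huM, Nat.floor_eq_iff (by positivity)]
    constructor <;> [linarith; linarith]
  have hwinM := hwin M hMn0 u hua hub
  rw [hfloor] at hwinM
  have hLM : L M ≠ 0 := (hLpos M).ne'
  have hLN : L N ≠ 0 := (hLpos N).ne'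
  have hxb : |L j / L M - 1| ≤ ε := hwinM
  have hyb : |L M / L N - 1| ≤ ε := hptN
  have hyabs : |L M / L N| ≤ 1 + ε := by
    have h := abs_add_le (L M / L N - 1) 1
    simp only [sub_add_cancel, abs_one] at h
    linarith
  have hprod : L j / L N - 1 = (L j / L M - 1) * (L M / L N) + (L M / L N - 1) := by
    field_simp
    ring
  rw [hprod]
  calc |(L j / L M - 1) * (L M / L N) + (L M / L N - 1)|
      ≤ |(L j / L M - 1) * (L M / L N)| + |L M / L N - 1| := abs_add_le _ _
    _ = |L j / L M - 1| * |L M / L N| + |L M / L N - 1| := by rw [abs_mul]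
    _ ≤ ε * (1 + ε) + ε := by
        have := mul_le_mul hxb hyabs (abs_nonneg _) (le_of_lt hε)
        linarith
    _ = 2*ε + ε^2 := by ring


lemma uct (L : ℕ → ℝ) (hLpos : ∀ n, 0 < L n) (hL : SlowlyVaryingNat L)
    {η : ℝ} (hη : 0 < η) :
    ∀ᶠ N : ℕ in atTop, ∀ j : ℕ, N ≤ 2*j → j ≤ N → |L j / L N - 1| ≤ η := by
  classical
  set ε := min (η/3) (1/2) with hεdef
  have hε : 0 < ε := lt_min (by linarith) (by norm_num)
  have hεle : 2*ε + ε^2 ≤ η := by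
    have h1 : ε ≤ η/3 := min_le_left _ _
    have h2 : ε ≤ 1/2 := min_le_right _ _
    nlinarith
  obtain ⟨a, b, ha, hab, n₀, hwin⟩ := window L hL hε
  set a' := a + (b-a)/3 with ha'def
  set b' := b - (b-a)/3 with hb'def
  have ha'0 : 0 < a' := by rw [ha'def]; linarith
  have ha'b' : a' < b' := by rw [ha'def, hb'def]; linarith
  set ρ := b'/a' with hρdef
  have hρ : 1 < ρ := (one_lt_div ha'0).mpr ha'b'
  obtain ⟨K, hK⟩ := pow_unbounded_of_one_lt (2:ℝ) hρ
  -- the translated windows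
  have hall : ∀ᶠ N : ℕ in atTop, ∀ i ∈ Finset.range (K+1), ∀ j : ℕ,
      (ρ^i/(2*a')) * a' * N ≤ j → (j:ℝ) ≤ (ρ^i/(2*a')) * b' * N →
      |L j / L N - 1| ≤ 2*ε + ε^2 := by
    rw [Finset.eventually_all]
    intro i _
    exact translateWin L hLpos hL hε ha hab n₀ hwin (by positivity)
  filter_upwards [hall, eventually_ge_atTop 1] with N hN hN1
  intro j hj1 hj2
  have hNpos : (0:ℝ) < N := by exact_mod_cast hN1
  have hjpos : (0:ℝ) < j := by
    have : 1 ≤ j := by omega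
    exact_mod_cast this
  -- find i
  set P : ℕ → Prop := fun i => ρ^i * N ≤ 2*(j:ℝ) with hP
  have hP0 : P 0 := by
    simp only [hP, pow_zero, one_mul]
    exact_mod_cast by exact_mod_cast (by exact_mod_cast hj1 : (N:ℝ) ≤ ((2*j : ℕ):ℝ))
  have hDP : DecidablePred P := Classical.decPred P
  set i := @Nat.findGreatest P hDP K with hidef
  have hiK : i ≤ K := Nat.findGreatest_le K
  have hPi : P i := Nat.findGreatest_spec (Nat.zero_le K) hP0
  have hupper : 2*(j:ℝ) ≤ ρ^(i+1) * N := by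
    by_cases hc : i < K
    · have hnot : ¬ P (i+1) :=
        Nat.findGreatest_is_greatest (n := K) (by rw [← hidef]; omega) (by omega)
      rw [hP] at hnot
      push_neg at hnot
      linarith [hnot]
    · have hiK' : i = K := by omega
      have h2j : (2:ℝ)*(j:ℝ) ≤ 2*N := by
        have : (j:ℝ) ≤ N := by exact_mod_cast hj2
        linarith
      have : (2:ℝ) * N ≤ ρ^(i+1) * N := by
        have : (2:ℝ) ≤ ρ^(i+1) := le_trans (le_of_lt hK) (by
          rw [hiK']
          exact pow_le_pow_right₀ (le_of_lt hρ) (Nat.le_succ K))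
        nlinarith
      linarith
  -- apply window i
  have := hN i (Finset.mem_range.mpr (Nat.lt_succ_of_le hiK)) j ?_ ?_
  · exact le_trans this hεle
  · have : (ρ^i/(2*a')) * a' = ρ^i/2 := by field_simp
    rw [this]
    have := hPi
    rw [hP] at this
    linarith [this]
  · have hb'eq : (ρ^i/(2*a')) * b' = ρ^(i+1)/2 := by
      rw [hρdef, pow_succ]; field_simp
    rw [hb'eq]
    linarith [hupper]


variable {L : ℕ → ℝ} {c_q : ℝ} {q u : ℕ → ℝ} {δ : ℝ}


lemma qpos (hLpos : ∀ n, 0 < L n) (hcq : 0 < c_q) (hqa : HQA L c_q q) : ∀ᶠ n : ℕ in atTop, 0 < q n := by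
  have h := hqa.eventually (eventually_gt_nhds (half_lt_self hcq))
  filter_upwards [h, eventually_ge_atTop 1] with n hn hn1
  have hnp : (0:ℝ) < (n:ℝ) ^ ((3:ℝ)/2) :=
    Real.rpow_pos_of_pos (by exact_mod_cast hn1) _
  by_contra hq
  push_neg at hq
  have : (n:ℝ) ^ ((3:ℝ)/2) * q n / L n ≤ 0 := by
    apply div_nonpos_of_nonpos_of_nonneg
    · exact mul_nonpos_of_nonneg_of_nonpos (le_of_lt hnp) hq
    · exact le_of_lt (hLpos n)
  linarith [lt_of_lt_of_le (half_pos hcq) (le_of_lt hn)]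

lemma qratio (hLpos : ∀ n, 0 < L n) (hL : SlowlyVaryingNat L) (hcq : 0 < c_q) (hqa : HQA L c_q q) (i : ℕ) :
    Tendsto (fun N : ℕ => q (N - i) / q N) atTop (nhds 1) := by
  set e : ℝ := (3:ℝ)/2 with he
  set g : ℕ → ℝ := fun n => (n:ℝ) ^ e * q n / L n with hg
  have hsub : Tendsto (fun N : ℕ => N - i) atTop atTop := tendsto_sub_atTop_nat i
  have hA : Tendsto (fun N : ℕ => g (N - i) / g N) atTop (nhds 1) := by
    have := (hqa.comp hsub).div hqa (ne_of_gt hcq)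
    rw [div_self (ne_of_gt hcq)] at this
    exact this
  have hB : Tendsto (fun N : ℕ => L (N - i) / L N) atTop (nhds 1) := by
    rw [Metric.tendsto_atTop]
    intro ε hε
    obtain ⟨N₀, hN₀⟩ := eventually_atTop.mp (uct L hLpos hL (half_pos hε))
    refine ⟨max N₀ (2*i + 2), fun n hn => ?_⟩
    have h1 : N₀ ≤ n := le_trans (le_max_left _ _) hn
    have h2 : 2*i + 2 ≤ n := le_trans (le_max_right _ _) hn
    have := hN₀ n h1 (n - i) (by omega) (by omega)
    rw [Real.dist_eq]
    calc |L (n-i)/L n - 1| ≤ ε/2 := this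
      _ < ε := by linarith
  have hC : Tendsto (fun N : ℕ => ((N:ℝ)) ^ e / (((N - i : ℕ)):ℝ) ^ e) atTop (nhds 1) := by
    have h1 : Tendsto (fun N : ℕ => ((N - i : ℕ):ℝ) / (N:ℝ)) atTop (nhds 1) := by
      have h0 : Tendsto (fun N : ℕ => 1 - (i:ℝ)/(N:ℝ)) atTop (nhds 1) := by
        have := tendsto_const_div_atTop_nhds_zero_nat (i:ℝ)
        have h := (tendsto_const_nhds (x := (1:ℝ)) (f := atTop (α := ℕ))).sub this
        simpa using h
      apply h0.congr'
      filter_upwards [eventually_ge_atTop (i+1)] with N hN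
      have hiN : i ≤ N := by omega
      have hNpos : (0:ℝ) < N := by exact_mod_cast (by omega : 0 < N)
      rw [Nat.cast_sub hiN]
      field_simp
    have h2 : Tendsto (fun N : ℕ => (((N - i : ℕ):ℝ) / (N:ℝ)) ^ e) atTop (nhds 1) := by
      have hcont : ContinuousAt (fun x : ℝ => x ^ e) 1 :=
        Real.continuousAt_rpow_const 1 e (Or.inl one_ne_zero)
      have := hcont.tendsto.comp h1
      rw [Real.one_rpow] at this
      exact this
    have h3 := h2.inv₀ (by norm_num)
    rw [inv_one] at h3
    apply h3.congr'
    filter_upwards [eventually_ge_atTop (i+1)] with N hN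
    have hiN : (0:ℝ) < ((N - i : ℕ):ℝ) := by exact_mod_cast (by omega : 0 < N - i)
    have hNpos : (0:ℝ) < (N:ℝ) := by exact_mod_cast (by omega : 0 < N)
    rw [Real.div_rpow (le_of_lt hiN) (le_of_lt hNpos)]
    rw [inv_div]
  have hiden : ∀ᶠ N : ℕ in atTop,
      (g (N - i) / g N) * (L (N - i) / L N) * (((N:ℝ)) ^ e / (((N - i : ℕ)):ℝ) ^ e)
        = q (N - i) / q N := by
    filter_upwards [eventually_ge_atTop (i+1),
      (qpos hLpos hcq hqa), hsub.eventually (qpos hLpos hcq hqa)]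
      with N hN hqN hqNi
    have hiN : (0:ℝ) < ((N - i : ℕ):ℝ) := by exact_mod_cast (by omega : 0 < N - i)
    have hNpos : (0:ℝ) < (N:ℝ) := by exact_mod_cast (by omega : 0 < N)
    have hre : (0:ℝ) < ((N - i:ℕ):ℝ) ^ e := Real.rpow_pos_of_pos hiN e
    have hre2 : (0:ℝ) < ((N:ℕ):ℝ) ^ e := Real.rpow_pos_of_pos hNpos e
    rw [hg]
    field_simp [hre.ne', hre2.ne', hqN.ne', hqNi.ne', (hLpos N).ne', (hLpos (N-i)).ne']
  have := (hA.mul hB).mul hC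
  rw [show (1:ℝ) * 1 * 1 = 1 by norm_num] at this
  exact this.congr' hiden

lemma qbound (hLpos : ∀ n, 0 < L n) (hL : SlowlyVaryingNat L) (hcq : 0 < c_q) (hqa : HQA L c_q q) : ∃ C : ℝ, 0 < C ∧ ∀ᶠ N : ℕ in atTop, ∀ j : ℕ, N ≤ 2*j → j ≤ N →
    q j ≤ C * q N := by
  refine ⟨32, by norm_num, ?_⟩
  set e : ℝ := (3:ℝ)/2 with he
  have hg1 : ∀ᶠ n : ℕ in atTop, c_q/2 < (n:ℝ) ^ e * q n / L n ∧ (n:ℝ) ^ e * q n / L n < 2*c_q := by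
    have h1 := hqa.eventually (eventually_gt_nhds (half_lt_self hcq))
    have h2 := hqa.eventually (eventually_lt_nhds (by linarith : c_q < 2*c_q))
    filter_upwards [h1, h2] with n ha hb; exact ⟨ha, hb⟩
  obtain ⟨n₁, hn₁⟩ := eventually_atTop.mp hg1
  have hLuct := uct L hLpos hL (by norm_num : (0:ℝ) < 1)
  filter_upwards [hLuct, eventually_ge_atTop (2*n₁ + 2)] with N hN hN2
  intro j hj1 hj2
  have hjn₁ : n₁ ≤ j := by omega
  have hNn₁ : n₁ ≤ N := by omega
  have hjpos : (0:ℝ) < (j:ℝ) := by exact_mod_cast (by omega : 0 < j)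
  have hNpos : (0:ℝ) < (N:ℝ) := by exact_mod_cast (by omega : 0 < N)
  have hje : (0:ℝ) < (j:ℝ) ^ e := Real.rpow_pos_of_pos hjpos e
  have hNe : (0:ℝ) < (N:ℝ) ^ e := Real.rpow_pos_of_pos hNpos e
  obtain ⟨hgj1, hgj2⟩ := hn₁ j hjn₁
  obtain ⟨hgN1, hgN2⟩ := hn₁ N hNn₁
  have hLj : L j ≤ 2 * L N := by
    have := hN j hj1 hj2
    have h := abs_le.mp this
    have h2' : L j / L N ≤ 2 := by linarith [h.2]
    rw [div_le_iff₀ (hLpos N)] at h2'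
    linarith
  -- (N/j)^e ≤ 4
  have hpow : (N:ℝ) ^ e ≤ 4 * (j:ℝ) ^ e := by
    have hNj : (N:ℝ) ≤ 2 * (j:ℝ) := by exact_mod_cast hj1
    have h1 : (N:ℝ) ^ e ≤ (2 * (j:ℝ)) ^ e :=
      Real.rpow_le_rpow (le_of_lt hNpos) hNj (by norm_num [he])
    have h2 : (2 * (j:ℝ)) ^ e = (2:ℝ) ^ e * (j:ℝ) ^ e :=
      Real.mul_rpow (by norm_num) (le_of_lt hjpos)
    have h3 : (2:ℝ) ^ e ≤ 4 := by
      have : (2:ℝ) ^ e ≤ (2:ℝ) ^ (2:ℝ) :=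
        Real.rpow_le_rpow_of_exponent_le (by norm_num) (by norm_num [he])
      have h4 : (2:ℝ) ^ (2:ℝ) = 4 := by
        rw [show (2:ℝ) = ((2:ℕ):ℝ) by norm_num, Real.rpow_natCast]; norm_num
      linarith
    calc (N:ℝ)^e ≤ (2:ℝ)^e * (j:ℝ)^e := by rw [← h2]; exact h1
      _ ≤ 4 * (j:ℝ)^e := by nlinarith [le_of_lt hje]
  -- q j = g j * L j / j^e ≤ 2 c_q * 2 L N / j^e;  q N ≥ (c_q/2) L N / N^e
  have hqj : q j ≤ 2*c_q * L j / (j:ℝ)^e := by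
    rw [div_lt_iff₀ (hLpos j)] at hgj2
    rw [le_div_iff₀ hje]
    nlinarith
  have hqN : c_q/2 * L N / (N:ℝ)^e ≤ q N := by
    rw [lt_div_iff₀ (hLpos N)] at hgN1
    rw [div_le_iff₀ hNe]
    nlinarith
  have step1 : q j ≤ 4*c_q * L N / (j:ℝ)^e := by
    refine le_trans hqj ?_
    have h : 2*c_q * L j ≤ 4*c_q * L N := by nlinarith
    exact div_le_div_of_nonneg_right h hje.le
  have step2 : 4*c_q * L N / (j:ℝ)^e ≤ 16*c_q * L N / (N:ℝ)^e := by
    rw [div_le_div_iff₀ hje hNe]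
    nlinarith [mul_le_mul_of_nonneg_left hpow (by nlinarith [hLpos N, hcq] : (0:ℝ) ≤ 4*c_q*L N)]
  have step3 : 16*c_q * L N / (N:ℝ)^e ≤ 32 * q N := by
    have h : 16*c_q * L N /(N:ℝ)^e = 32 * (c_q/2 * L N / (N:ℝ)^e) := by ring
    rw [h]
    linarith [hqN]
  linarith


lemma convPow_nonneg (hq : ∀ n, 0 ≤ q n) : ∀ k n, 0 ≤ convPow q k n
  | 0, n => by rw [convPow]; positivity
  | k + 1, n => by
      rw [convPow]
      exact Finset.sum_nonneg fun i _ => mul_nonneg (convPow_nonneg hq k i) (hq _)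

lemma convPow_summable (hq : ∀ n, 0 ≤ q n) (hqs : Summable q) (hqt : ∑' n, q n = 1) :
    ∀ k, Summable (convPow q k) ∧ ∑' n, convPow q k n = 1 := by
  intro k
  induction k with
  | zero =>
      constructor
      · apply summable_of_finite_support
        apply Set.Finite.subset (Set.finite_singleton 0)
        intro n hn
        simp only [Function.mem_support, convPow] at hn
        by_contra h
        simp only [Set.mem_singleton_iff] at h
        simp [h] at hn
      · rw [show (fun n => convPow q 0 n) = fun n => if n = 0 then (1:ℝ) else 0 from rfl]
        exact tsum_ite_eq 0 1
  | succ k ih =>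
      have hknorm : Summable fun n => ‖convPow q k n‖ := by
        apply ih.1.congr
        intro n; rw [Real.norm_eq_abs, abs_of_nonneg (convPow_nonneg hq k n)]
      have hqnorm : Summable fun n => ‖q n‖ := by
        apply hqs.congr
        intro n; rw [Real.norm_eq_abs, abs_of_nonneg (hq n)]
      constructor
      · exact (summable_norm_sum_mul_range_of_summable_norm hknorm hqnorm).of_norm
      · have := tsum_mul_tsum_eq_tsum_sum_range_of_summable_norm hknorm hqnorm
        rw [ih.2, hqt] at this
        rw [show (fun n => convPow q (k+1) n) = fun n => ∑ i ∈ Finset.range (n+1),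
          convPow q k i * q (n - i) from rfl]
        rw [← this]; norm_num

lemma convPow_le_one (hq : ∀ n, 0 ≤ q n) (hqs : Summable q) (hqt : ∑' n, q n = 1) (k n : ℕ) :
    convPow q k n ≤ 1 := by
  obtain ⟨hs, ht⟩ := convPow_summable hq hqs hqt k
  calc convPow q k n ≤ ∑' m, convPow q k m :=
        Summable.le_tsum hs n fun m _ => convPow_nonneg hq k m
    _ = 1 := ht

lemma convPow_eq_zero (hq0 : q 0 = 0) : ∀ k n, n < k → convPow q k n = 0 := by
  intro k
  induction k with
  | zero => omega
  | succ k ih =>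
      intro n hn
      rw [convPow]
      apply Finset.sum_eq_zero
      intro i hi
      rw [Finset.mem_range] at hi
      by_cases h : i < k
      · rw [ih i h, zero_mul]
      · have : i = n ∧ k ≤ i := by omega
        have hni : n - i = 0 := by omega
        rw [hni, hq0, mul_zero]

lemma ZK_rec (K n : ℕ) :
    ZK q δ (K+1) n = (if n = 0 then 1 else 0)
      + δ * ∑ i ∈ Finset.range (n + 1), ZK q δ K i * q (n - i) := by
  rw [ZK, Finset.sum_range_succ']
  simp only [pow_zero, one_mul]
  rw [show convPow q 0 n = (if n = 0 then (1:ℝ) else 0) from rfl]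
  rw [add_comm]
  congr 1
  have : ∀ k, δ ^ (k+1) * convPow q (k+1) n
      = δ * (δ ^ k * ∑ i ∈ Finset.range (n+1), convPow q k i * q (n - i)) := by
    intro k; rw [pow_succ]; rw [show convPow q (k+1) n = ∑ i ∈ Finset.range (n+1),
      convPow q k i * q (n - i) from rfl]; ring
  rw [Finset.sum_congr rfl fun k _ => this k, ← Finset.mul_sum]
  congr 1
  simp_rw [Finset.mul_sum]
  rw [Finset.sum_comm]
  apply Finset.sum_congr rfl
  intro i _
  rw [ZK, Finset.sum_mul]
  apply Finset.sum_congr rfl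
  intro k _
  ring

lemma ZK_stable (hq0 : q 0 = 0) {K n : ℕ} (h : n ≤ K) : ZK q δ K n = Zc q δ n := by
  rw [ZK, Zc]
  symm
  apply Finset.sum_subset
  · intro k hk
    rw [Finset.mem_range] at *
    omega
  · intro k hk hk2
    rw [Finset.mem_range] at *
    rw [convPow_eq_zero hq0 k n (by omega), mul_zero]

lemma Zc_eq_ZK (n : ℕ) : Zc q δ n = ZK q δ n n := rfl

lemma Zc_renewal (hq0 : q 0 = 0) {n : ℕ} (hn : 1 ≤ n) :
    Zc q δ n = δ * ∑ i ∈ Finset.range (n + 1), Zc q δ i * q (n - i) := by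
  have h1 : Zc q δ n = ZK q δ ((n-1)+1) n := by
    rw [ZK_stable hq0 (by omega)]
  rw [h1, ZK_rec, if_neg (by omega)]
  rw [zero_add]
  congr 1
  rw [Finset.sum_range_succ, Finset.sum_range_succ]
  have hlast : q (n - n) = 0 := by simp [hq0]
  rw [hlast, mul_zero, mul_zero, add_zero, add_zero]
  apply Finset.sum_congr rfl
  intro i hi
  rw [Finset.mem_range] at hi
  rw [ZK_stable hq0 (by omega)]

lemma ZK_nonneg (hq : ∀ n, 0 ≤ q n) (hδ : 0 ≤ δ) (K n : ℕ) : 0 ≤ ZK q δ K n :=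
  Finset.sum_nonneg fun k _ => mul_nonneg (pow_nonneg hδ k) (convPow_nonneg hq k n)

lemma Zc_nonneg (hq : ∀ n, 0 ≤ q n) (hδ : 0 ≤ δ) (n : ℕ) : 0 ≤ Zc q δ n :=
  ZK_nonneg hq hδ n n

lemma gsum_le (hδ0 : 0 < δ) (hδ1 : δ < 1) (m : ℕ) :
    ∑ k ∈ Finset.range m, δ ^ k ≤ (1-δ)⁻¹ := by
  have h := hasSum_geometric_of_lt_one hδ0.le hδ1
  exact (Summable.sum_le_tsum _ (fun k _ => pow_nonneg hδ0.le k) h.summable).trans_eq h.tsum_eq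

lemma sumZK_le (hq : ∀ n, 0 ≤ q n) (hqs : Summable q) (hqt : ∑' n, q n = 1)
    (hδ0 : 0 < δ) (hδ1 : δ < 1) (K j : ℕ) :
    ∑ i ∈ Finset.range (j+1), ZK q δ K i ≤ (1-δ)⁻¹ := by
  simp only [ZK]
  rw [Finset.sum_comm]
  calc ∑ k ∈ Finset.range (K+1), ∑ i ∈ Finset.range (j+1), δ ^ k * convPow q k i
      = ∑ k ∈ Finset.range (K+1), δ ^ k * ∑ i ∈ Finset.range (j+1), convPow q k i := by
        simp_rw [Finset.mul_sum]
    _ ≤ ∑ k ∈ Finset.range (K+1), δ ^ k * 1 := by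
        apply Finset.sum_le_sum
        intro k _
        apply mul_le_mul_of_nonneg_left _ (pow_nonneg hδ0.le k)
        calc ∑ i ∈ Finset.range (j+1), convPow q k i
            ≤ ∑' i, convPow q k i := Summable.sum_le_tsum _
              (fun i _ => convPow_nonneg hq k i) (convPow_summable hq hqs hqt k).1
          _ = 1 := (convPow_summable hq hqs hqt k).2
    _ ≤ (1-δ)⁻¹ := by simpa using gsum_le hδ0 hδ1 (K+1)

lemma sumZc_le (hq : ∀ n, 0 ≤ q n) (hq0 : q 0 = 0) (hqs : Summable q) (hqt : ∑' n, q n = 1)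
    (hδ0 : 0 < δ) (hδ1 : δ < 1) (j : ℕ) :
    ∑ i ∈ Finset.range (j+1), Zc q δ i ≤ (1-δ)⁻¹ := by
  have : ∀ i ∈ Finset.range (j+1), Zc q δ i = ZK q δ j i := by
    intro i hi
    rw [Finset.mem_range] at hi
    rw [ZK_stable hq0 (by omega)]
  rw [Finset.sum_congr rfl this]
  exact sumZK_le hq hqs hqt hδ0 hδ1 j j

lemma Zc_le (hq : ∀ n, 0 ≤ q n) (hq0 : q 0 = 0) (hqs : Summable q) (hqt : ∑' n, q n = 1)
    (hδ0 : 0 < δ) (hδ1 : δ < 1) (n : ℕ) : Zc q δ n ≤ (1-δ)⁻¹ := by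
  calc Zc q δ n ≤ ∑ i ∈ Finset.range (n+1), Zc q δ i := by
        apply Finset.single_le_sum (f := fun i => Zc q δ i)
          (fun i _ => Zc_nonneg hq hδ0.le i)
        rw [Finset.mem_range]; omega
    _ ≤ (1-δ)⁻¹ := sumZc_le hq hq0 hqs hqt hδ0 hδ1 n

lemma sumZc_tendsto (hq : ∀ n, 0 ≤ q n) (hq0 : q 0 = 0) (hqs : Summable q)
    (hqt : ∑' n, q n = 1) (hδ0 : 0 < δ) (hδ1 : δ < 1) :
    Tendsto (fun m => ∑ i ∈ Finset.range (m+1), Zc q δ i) atTop (nhds (1-δ)⁻¹) := by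
  have hmono : Monotone (fun m => ∑ i ∈ Finset.range (m+1), Zc q δ i) := by
    apply monotone_nat_of_le_succ
    intro m
    have h := Finset.sum_range_succ (fun i => Zc q δ i) (m+1)
    have h2 := Zc_nonneg hq hδ0.le (m+1)
    show ∑ i ∈ Finset.range (m+1), Zc q δ i ≤ ∑ i ∈ Finset.range (m+1+1), Zc q δ i
    rw [h]
    linarith
  rw [Metric.tendsto_atTop]
  intro ε hε
  -- choose K with geometric partial sum ≥ (1-δ)⁻¹ - ε/2
  have hgeo := hasSum_geometric_of_lt_one hδ0.le hδ1
  have hps := hgeo.tendsto_sum_nat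
  have h1 : ∀ᶠ m : ℕ in atTop, (1-δ)⁻¹ - ε/2 < ∑ k ∈ Finset.range m, δ ^ k := by
    apply hps.eventually (eventually_gt_nhds (by linarith))
  obtain ⟨K, hK⟩ := h1.exists
  -- choose m₀ : for each k < K, partial sums of convPow q k are ≥ 1 - ε'
  set ε' : ℝ := ε/2 * (1-δ) with hε'
  have hε'pos : 0 < ε' := by
    have : 0 < 1 - δ := by linarith
    positivity
  have h2 : ∀ᶠ m : ℕ in atTop, ∀ k ∈ Finset.range K,
      1 - ε' < ∑ i ∈ Finset.range (m+1), convPow q k i := by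
    rw [Finset.eventually_all]
    intro k _
    have hps2 := (convPow_summable hq hqs hqt k).2 ▸ (convPow_summable hq hqs hqt k).1.hasSum.tendsto_sum_nat
    have : Tendsto (fun m : ℕ => ∑ i ∈ Finset.range (m+1), convPow q k i) atTop (nhds 1) :=
      hps2.comp (tendsto_add_atTop_nat 1)
    exact this.eventually (eventually_gt_nhds (by linarith))
  obtain ⟨m₀, hm₀⟩ := eventually_atTop.mp h2
  refine ⟨max m₀ K, fun m hm => ?_⟩
  have hm₀m : m₀ ≤ m := le_trans (le_max_left _ _) hm
  have hKm : K ≤ m := le_trans (le_max_right _ _) hm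
  rw [Real.dist_eq, abs_sub_lt_iff]
  constructor
  · -- S m - A < ε : since S m ≤ A
    have := sumZc_le hq hq0 hqs hqt hδ0 hδ1 m
    linarith
  · -- A - S m < ε
    have hlow : (1-δ)⁻¹ - ε < ∑ i ∈ Finset.range (m+1), Zc q δ i := by
      have hswap : ∑ i ∈ Finset.range (m+1), Zc q δ i
          = ∑ k ∈ Finset.range (m+1), δ ^ k * ∑ i ∈ Finset.range (m+1), convPow q k i := by
        have hZKm : ∀ i ∈ Finset.range (m+1), Zc q δ i = ZK q δ m i := by
          intro i hi; rw [Finset.mem_range] at hi; rw [ZK_stable hq0 (by omega)]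
        rw [Finset.sum_congr rfl hZKm]
        show ∑ i ∈ Finset.range (m+1), ZK q δ m i = _
        simp only [ZK]
        rw [Finset.sum_comm]
        simp_rw [Finset.mul_sum]
      rw [hswap]
      have hsub : Finset.range K ⊆ Finset.range (m+1) := by
        apply Finset.range_subset_range.mpr; omega
      have hbound : ∑ k ∈ Finset.range K, δ ^ k * (1 - ε')
          ≤ ∑ k ∈ Finset.range (m+1), δ ^ k * ∑ i ∈ Finset.range (m+1), convPow q k i := by
        calc ∑ k ∈ Finset.range K, δ ^ k * (1 - ε')
            ≤ ∑ k ∈ Finset.range K, δ ^ k * ∑ i ∈ Finset.range (m+1), convPow q k i := by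
              apply Finset.sum_le_sum
              intro k hk
              exact mul_le_mul_of_nonneg_left (le_of_lt (hm₀ m hm₀m k hk)) (pow_nonneg hδ0.le k)
          _ ≤ _ := by
              apply Finset.sum_le_sum_of_subset_of_nonneg hsub
              intro k _ _
              exact mul_nonneg (pow_nonneg hδ0.le k) (Finset.sum_nonneg fun i _ =>
                convPow_nonneg hq k i)
      set s := ∑ k ∈ Finset.range K, δ ^ k with hs
      have hgle : s ≤ (1-δ)⁻¹ := gsum_le hδ0 hδ1 K
      have hrw : ∑ k ∈ Finset.range K, δ ^ k * (1 - ε') = s - ε' * s := by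
        rw [← Finset.sum_mul]; ring
      have hεs : ε' * s ≤ ε' * (1-δ)⁻¹ := mul_le_mul_of_nonneg_left hgle hε'pos.le
      have hεA : ε' * (1-δ)⁻¹ = ε/2 := by
        have hne : (1-δ) ≠ 0 := by intro h; rw [sub_eq_zero] at h; linarith
        rw [hε', mul_assoc, mul_inv_cancel₀ hne, mul_one]
      rw [hrw] at hbound
      linarith
    linarith


lemma sum_split (f : ℕ → ℝ) {m N : ℕ} (h : 2*m + 2 ≤ N) :
    ∑ i ∈ Finset.range (N+1), f i = ∑ i ∈ Finset.range (m+1), f i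
      + ∑ i ∈ Finset.Ioo m (N-m), f i + ∑ i ∈ Finset.Icc (N-m) N, f i := by
  have h1 : Finset.range (N+1) = (Finset.range (m+1) ∪ Finset.Ioo m (N-m)) ∪ Finset.Icc (N-m) N := by
    ext x
    simp only [Finset.mem_range, Finset.mem_union, Finset.mem_Ioo, Finset.mem_Icc]
    omega
  rw [h1, Finset.sum_union, Finset.sum_union]
  · rw [Finset.disjoint_left]
    intro x hx hy
    simp only [Finset.mem_range, Finset.mem_Ioo] at *
    omega
  · rw [Finset.disjoint_left]
    intro x hx hy
    simp only [Finset.mem_range, Finset.mem_union, Finset.mem_Ioo, Finset.mem_Icc] at *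
    omega

lemma sum_flip' (g : ℕ → ℝ) {m N : ℕ} (h : m ≤ N) :
    ∑ i ∈ Finset.Icc (N-m) N, g i = ∑ j ∈ Finset.range (m+1), g (N - j) := by
  have himg : Finset.Icc (N-m) N = (Finset.range (m+1)).image (fun j => N - j) := by
    ext x
    simp only [Finset.mem_Icc, Finset.mem_image, Finset.mem_range]
    constructor
    · intro hx; exact ⟨N - x, by omega, by omega⟩
    · rintro ⟨j, hj, rfl⟩; omega
  rw [himg, Finset.sum_image]
  intro a ha b hb hab
  simp only [Finset.coe_range, Set.mem_Iio] at ha hb hab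
  omega

lemma sum_tail_le (hq : ∀ n, 0 ≤ q n) (hqs : Summable q) (hqt : ∑' n, q n = 1)
    {m : ℕ} {S : Finset ℕ} (hS : ∀ i ∈ S, m < i) :
    ∑ i ∈ S, q i ≤ 1 - ∑ i ∈ Finset.range (m+1), q i := by
  have hdisj : Disjoint S (Finset.range (m+1)) := by
    rw [Finset.disjoint_left]
    intro x hx hy
    rw [Finset.mem_range] at hy
    exact absurd (hS x hx) (by omega)
  have := Summable.sum_le_tsum (S ∪ Finset.range (m+1)) (fun i _ => hq i) hqs
  rw [Finset.sum_union hdisj, hqt] at this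
  linarith

lemma tail_anti (hq : ∀ n, 0 ≤ q n) :
    Antitone (fun m : ℕ => 1 - ∑ i ∈ Finset.range (m+1), q i) := by
  apply antitone_nat_of_succ_le
  intro m
  have h := Finset.sum_range_succ q (m+1)
  have h2 := hq (m+1)
  show 1 - ∑ i ∈ Finset.range (m+1+1), q i ≤ 1 - ∑ i ∈ Finset.range (m+1), q i
  rw [h]
  linarith

lemma tail_tendsto (hq : ∀ n, 0 ≤ q n) (hqs : Summable q) (hqt : ∑' n, q n = 1) :
    Tendsto (fun m : ℕ => 1 - ∑ i ∈ Finset.range (m+1), q i) atTop (nhds 0) := by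
  have h := hqs.hasSum.tendsto_sum_nat.comp (tendsto_add_atTop_nat 1)
  rw [hqt] at h
  have := (tendsto_const_nhds (x := (1:ℝ)) (f := atTop (α := ℕ))).sub h
  simpa using this

lemma midsum {C : ℝ} (hq : ∀ n, 0 ≤ q n) (hqs : Summable q) (hqt : ∑' n, q n = 1)
    {m N : ℕ} (hmN : 2*m + 2 ≤ N) (hC0 : 0 ≤ C) (hqN0 : 0 ≤ q N)
    (hCb : ∀ j : ℕ, N ≤ 2*j → j ≤ N → q j ≤ C * q N) :
    ∑ i ∈ Finset.Ioo m (N - m), q i * q (N - i)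
      ≤ 2 * C * (1 - ∑ i ∈ Finset.range (m+1), q i) * q N := by
  set τ := 1 - ∑ i ∈ Finset.range (m+1), q i with hτ
  have hτ0 : 0 ≤ τ := by
    have := Summable.sum_le_tsum (Finset.range (m+1)) (fun i _ => hq i) hqs
    rw [hqt] at this
    rw [hτ]
    linarith
  set S₁ := (Finset.Ioo m (N - m)).filter (fun i => 2*i ≤ N) with hS₁
  set S₂ := (Finset.Ioo m (N - m)).filter (fun i => ¬ 2*i ≤ N) with hS₂
  have hsplit : ∑ i ∈ Finset.Ioo m (N - m), q i * q (N - i)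
      = ∑ i ∈ S₁, q i * q (N - i) + ∑ i ∈ S₂, q i * q (N - i) :=
    (Finset.sum_filter_add_sum_filter_not _ _ _).symm
  have hb1 : ∑ i ∈ S₁, q i * q (N - i) ≤ C * τ * q N := by
    calc ∑ i ∈ S₁, q i * q (N - i) ≤ ∑ i ∈ S₁, q i * (C * q N) := by
          apply Finset.sum_le_sum
          intro i hi
          simp only [hS₁, Finset.mem_filter, Finset.mem_Ioo] at hi
          exact mul_le_mul_of_nonneg_left (hCb (N - i) (by omega) (by omega)) (hq i)
      _ = (∑ i ∈ S₁, q i) * (C * q N) := by rw [← Finset.sum_mul]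
      _ ≤ τ * (C * q N) := by
          apply mul_le_mul_of_nonneg_right _ (by positivity)
          apply sum_tail_le hq hqs hqt
          intro i hi
          simp only [hS₁, Finset.mem_filter, Finset.mem_Ioo] at hi
          omega
      _ = C * τ * q N := by ring
  have hb2 : ∑ i ∈ S₂, q i * q (N - i) ≤ C * τ * q N := by
    calc ∑ i ∈ S₂, q i * q (N - i) ≤ ∑ i ∈ S₂, (C * q N) * q (N - i) := by
          apply Finset.sum_le_sum
          intro i hi
          simp only [hS₂, Finset.mem_filter, Finset.mem_Ioo] at hi
          exact mul_le_mul_of_nonneg_right (hCb i (by omega) (by omega)) (hq _)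
      _ = (C * q N) * ∑ i ∈ S₂, q (N - i) := by rw [← Finset.mul_sum]
      _ ≤ (C * q N) * τ := by
          apply mul_le_mul_of_nonneg_left _ (by positivity)
          rw [show ∑ i ∈ S₂, q (N - i) = ∑ j ∈ S₂.image (fun i => N - i), q j by
            rw [Finset.sum_image]
            intro a ha b hb hab
            simp only [hS₂, Finset.mem_coe, Finset.mem_filter, Finset.mem_Ioo] at ha hb hab
            omega]
          apply sum_tail_le hq hqs hqt
          intro j hj
          simp only [Finset.mem_image, hS₂, Finset.mem_filter, Finset.mem_Ioo] at hj
          obtain ⟨i, ⟨⟨h1, h2⟩, h3⟩, rfl⟩ := hj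
          omega
      _ = C * τ * q N := by ring
  rw [hsplit]
  linarith

lemma convUB {B S₀ εa εm : ℝ} {m N : ℕ}
    (hq : ∀ n, 0 ≤ q n) (hu0 : ∀ i, 0 ≤ u i)
    (hqN0 : 0 ≤ q N) (hεa : 0 ≤ εa) (hB0 : 0 ≤ B)
    (hS₀ : ∑ i ∈ Finset.range (m+1), u i ≤ S₀)
    (hB : ∀ i, m < i → i ≤ N → u i ≤ B * q i)
    (ha : ∀ i ≤ m, q (N - i) ≤ (1+εa) * q N)
    (hmid : ∑ i ∈ Finset.Ioo m (N - m), q i * q (N - i) ≤ εm * q N)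
    (hσ : ∑ j ∈ Finset.range (m+1), q j ≤ 1)
    (hmN : 2*m + 2 ≤ N) :
    ∑ i ∈ Finset.range (N+1), u i * q (N - i)
      ≤ ((1+εa) * S₀ + B * εm + B * (1+εa)) * q N := by
  rw [sum_split _ hmN]
  have hT1 : ∑ i ∈ Finset.range (m+1), u i * q (N - i) ≤ (1+εa) * S₀ * q N := by
    calc ∑ i ∈ Finset.range (m+1), u i * q (N - i)
        ≤ ∑ i ∈ Finset.range (m+1), u i * ((1+εa) * q N) := by
          apply Finset.sum_le_sum
          intro i hi
          rw [Finset.mem_range] at hi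
          exact mul_le_mul_of_nonneg_left (ha i (by omega)) (hu0 i)
      _ = (∑ i ∈ Finset.range (m+1), u i) * ((1+εa) * q N) := by rw [← Finset.sum_mul]
      _ ≤ S₀ * ((1+εa) * q N) := mul_le_mul_of_nonneg_right hS₀ (by positivity)
      _ = (1+εa) * S₀ * q N := by ring
  have hT2 : ∑ i ∈ Finset.Ioo m (N-m), u i * q (N - i) ≤ B * εm * q N := by
    calc ∑ i ∈ Finset.Ioo m (N-m), u i * q (N - i)
        ≤ ∑ i ∈ Finset.Ioo m (N-m), (B * q i) * q (N - i) := by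
          apply Finset.sum_le_sum
          intro i hi
          rw [Finset.mem_Ioo] at hi
          exact mul_le_mul_of_nonneg_right (hB i hi.1 (by omega)) (hq _)
      _ = B * ∑ i ∈ Finset.Ioo m (N-m), q i * q (N - i) := by
          rw [Finset.mul_sum]; apply Finset.sum_congr rfl; intros; ring
      _ ≤ B * (εm * q N) := mul_le_mul_of_nonneg_left hmid hB0
      _ = B * εm * q N := by ring
  have hT3 : ∑ i ∈ Finset.Icc (N-m) N, u i * q (N - i) ≤ B * (1+εa) * q N := by
    rw [sum_flip' _ (by omega)]
    have hj : ∀ j ∈ Finset.range (m+1), u (N - j) * q (N - (N - j)) ≤ (B * (1+εa) * q N) * q j := by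
      intro j hj
      rw [Finset.mem_range] at hj
      have hNj : N - (N - j) = j := by omega
      rw [hNj]
      have h1 : u (N - j) ≤ B * q (N - j) := hB _ (by omega) (by omega)
      have h2 : q (N - j) ≤ (1+εa) * q N := ha j (by omega)
      calc u (N - j) * q j ≤ (B * q (N - j)) * q j :=
            mul_le_mul_of_nonneg_right h1 (hq j)
        _ ≤ (B * ((1+εa) * q N)) * q j := by
            apply mul_le_mul_of_nonneg_right _ (hq j)
            exact mul_le_mul_of_nonneg_left h2 hB0
        _ = (B * (1+εa) * q N) * q j := by ring
    calc ∑ j ∈ Finset.range (m+1), u (N - j) * q (N - (N - j))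
        ≤ ∑ j ∈ Finset.range (m+1), (B * (1+εa) * q N) * q j := Finset.sum_le_sum hj
      _ = (B * (1+εa) * q N) * ∑ j ∈ Finset.range (m+1), q j := by rw [← Finset.mul_sum]
      _ ≤ (B * (1+εa) * q N) * 1 := mul_le_mul_of_nonneg_left hσ (by positivity)
      _ = B * (1+εa) * q N := by ring
  linarith

lemma convLB {B' S₁ σ₀ εa : ℝ} {m N : ℕ}
    (hq : ∀ n, 0 ≤ q n) (hu0 : ∀ i, 0 ≤ u i)
    (hqN0 : 0 ≤ q N) (hεa1 : εa ≤ 1) (hB0 : 0 ≤ B')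
    (hS₁ : S₁ ≤ ∑ i ∈ Finset.range (m+1), u i)
    (hB : ∀ i, m < i → i ≤ N → B' * q i ≤ u i)
    (ha : ∀ i ≤ m, (1-εa) * q N ≤ q (N - i))
    (hσ : σ₀ ≤ ∑ j ∈ Finset.range (m+1), q j)
    (hmN : 2*m + 2 ≤ N) :
    ((1-εa) * S₁ + B' * (1-εa) * σ₀) * q N
      ≤ ∑ i ∈ Finset.range (N+1), u i * q (N - i) := by
  rw [sum_split _ hmN]
  have hT1 : (1-εa) * S₁ * q N ≤ ∑ i ∈ Finset.range (m+1), u i * q (N - i) := by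
    calc (1-εa) * S₁ * q N = S₁ * ((1-εa) * q N) := by ring
      _ ≤ (∑ i ∈ Finset.range (m+1), u i) * ((1-εa) * q N) :=
          mul_le_mul_of_nonneg_right hS₁ (mul_nonneg (by linarith) hqN0)
      _ = ∑ i ∈ Finset.range (m+1), u i * ((1-εa) * q N) := by rw [Finset.sum_mul]
      _ ≤ ∑ i ∈ Finset.range (m+1), u i * q (N - i) := by
          apply Finset.sum_le_sum
          intro i hi
          rw [Finset.mem_range] at hi
          exact mul_le_mul_of_nonneg_left (ha i (by omega)) (hu0 i)
  have hT2 : (0:ℝ) ≤ ∑ i ∈ Finset.Ioo m (N-m), u i * q (N - i) :=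
    Finset.sum_nonneg fun i _ => mul_nonneg (hu0 i) (hq _)
  have hT3 : B' * (1-εa) * σ₀ * q N ≤ ∑ i ∈ Finset.Icc (N-m) N, u i * q (N - i) := by
    rw [sum_flip' _ (by omega)]
    have hj : ∀ j ∈ Finset.range (m+1), (B' * (1-εa) * q N) * q j
        ≤ u (N - j) * q (N - (N - j)) := by
      intro j hjm
      rw [Finset.mem_range] at hjm
      have hNj : N - (N - j) = j := by omega
      rw [hNj]
      have h1 : B' * q (N - j) ≤ u (N - j) := hB _ (by omega) (by omega)
      have h2 : (1-εa) * q N ≤ q (N - j) := ha j (by omega)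
      calc (B' * (1-εa) * q N) * q j = (B' * ((1-εa) * q N)) * q j := by ring
        _ ≤ (B' * q (N - j)) * q j := by
            apply mul_le_mul_of_nonneg_right _ (hq j)
            exact mul_le_mul_of_nonneg_left h2 hB0
        _ ≤ u (N - j) * q j := mul_le_mul_of_nonneg_right h1 (hq j)
    calc B' * (1-εa) * σ₀ * q N = (B' * (1-εa) * q N) * σ₀ := by ring
      _ ≤ (B' * (1-εa) * q N) * ∑ j ∈ Finset.range (m+1), q j :=
          mul_le_mul_of_nonneg_left hσ (mul_nonneg (mul_nonneg hB0 (by linarith)) hqN0)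
      _ = ∑ j ∈ Finset.range (m+1), (B' * (1-εa) * q N) * q j := by rw [Finset.mul_sum]
      _ ≤ ∑ j ∈ Finset.range (m+1), u (N - j) * q (N - (N - j)) := Finset.sum_le_sum hj
  linarith


lemma ZK_le (hq : ∀ n, 0 ≤ q n) (hqs : Summable q) (hqt : ∑' n, q n = 1)
    (hδ0 : 0 < δ) (hδ1 : δ < 1) (K n : ℕ) : ZK q δ K n ≤ (1-δ)⁻¹ := by
  calc ZK q δ K n ≤ ∑ i ∈ Finset.range (n+1), ZK q δ K i := by
        apply Finset.single_le_sum (f := fun i => ZK q δ K i)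
          (fun i _ => ZK_nonneg hq hδ0.le K i)
        rw [Finset.mem_range]; omega
    _ ≤ (1-δ)⁻¹ := sumZK_le hq hqs hqt hδ0 hδ1 K n

lemma qshift (hqratio : ∀ i : ℕ, Tendsto (fun N : ℕ => q (N - i) / q N) atTop (nhds 1))
    (hqpos : ∀ᶠ n : ℕ in atTop, 0 < q n) {ε : ℝ} (hε : 0 < ε) (m : ℕ) :
    ∀ᶠ n : ℕ in atTop, ∀ i ≤ m, (1-ε) * q n ≤ q (n - i) ∧ q (n - i) ≤ (1+ε) * q n := by
  have hall : ∀ᶠ n : ℕ in atTop, ∀ i ∈ Finset.range (m+1), |q (n - i) / q n - 1| ≤ ε := by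
    rw [Finset.eventually_all]
    intro i _
    exact (hqratio i).eventually (Metric.eventually_nhds_iff_ball.mpr
      ⟨ε, hε, fun y hy => le_of_lt (by simpa [Real.dist_eq] using hy)⟩)
  filter_upwards [hall, hqpos] with n hn hqn
  intro i hi
  have h := abs_le.mp (hn i (Finset.mem_range.mpr (by omega)))
  constructor
  · have h1 : 1 - ε ≤ q (n - i) / q n := by linarith [h.1]
    rw [le_div_iff₀ hqn] at h1
    linarith
  · have h2 : q (n - i) / q n ≤ 1 + ε := by linarith [h.2]
    rw [div_le_iff₀ hqn] at h2
    linarith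


lemma bigB (hq : ∀ n, 0 ≤ q n) (hq0 : q 0 = 0) (hqs : Summable q) (hqt : ∑' n, q n = 1)
    (hδ0 : 0 < δ) (hδ1 : δ < 1)
    (hqpos : ∀ᶠ n : ℕ in atTop, 0 < q n)
    (hqratio : ∀ i : ℕ, Tendsto (fun N : ℕ => q (N - i) / q N) atTop (nhds 1))
    {C : ℝ} (hC0 : 0 < C)
    (hCb : ∀ᶠ N : ℕ in atTop, ∀ j, N ≤ 2*j → j ≤ N → q j ≤ C * q N) :
    ∃ B : ℝ, 0 < B ∧ ∀ᶠ n : ℕ in atTop, Zc q δ n ≤ B * q n := by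
  set ε₀ : ℝ := (1-δ)/(4*δ) with hε₀def
  have hδ1' : 0 < 1 - δ := by linarith
  have hε₀ : 0 < ε₀ := by positivity
  -- choose m̄
  have htail := (tail_tendsto hq hqs hqt).eventually
    (eventually_le_nhds (show (0:ℝ) < ε₀/(2*C) by positivity))
  obtain ⟨n₀, hn₀⟩ := eventually_atTop.mp hqpos
  obtain ⟨m₁, hm₁⟩ := eventually_atTop.mp htail
  set m : ℕ := max n₀ m₁ with hm
  have hτ : 2 * C * (1 - ∑ i ∈ Finset.range (m+1), q i) ≤ ε₀ := by
    have hthis := hm₁ m (le_max_right _ _)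
    calc 2 * C * (1 - ∑ i ∈ Finset.range (m+1), q i) ≤ 2 * C * (ε₀/(2*C)) :=
          mul_le_mul_of_nonneg_left hthis (by positivity)
      _ = ε₀ := by field_simp
  -- choose n₂
  obtain ⟨N₁, hN₁⟩ := eventually_atTop.mp hCb
  obtain ⟨n₃, hn₃⟩ := eventually_atTop.mp (qshift hqratio hqpos hε₀ m)
  set n₂ : ℕ := max (max N₁ n₃) (2*m+2) with hn₂def
  have hmn₂ : m < n₂ := by
    have : 2*m+2 ≤ n₂ := le_max_right _ _
    omega
  -- Qmin
  have hne : (Finset.Ioc m n₂).Nonempty := Finset.nonempty_Ioc.mpr hmn₂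
  set Qmin := (Finset.Ioc m n₂).inf' hne q with hQ
  have hQpos : 0 < Qmin := by
    rw [Finset.lt_inf'_iff]
    intro b hb
    rw [Finset.mem_Ioc] at hb
    exact hn₀ b (by omega)
  set X : ℝ := δ*(1+ε₀)*(1-δ)⁻¹ with hXdef
  have hXpos : 0 < X := by positivity
  set B : ℝ := max ((1-δ)⁻¹ / Qmin) (2*X/(1-δ)) with hB
  have hBpos : 0 < B := lt_of_lt_of_le (by positivity) (le_max_right _ _)
  refine ⟨B, hBpos, ?_⟩
  have key : ∀ K : ℕ, ∀ n : ℕ, m < n → ZK q δ K n ≤ B * q n := by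
    intro K
    induction K with
    | zero =>
        intro n hn
        have hZ : ZK q δ 0 n = 0 := by
          rw [ZK]
          rw [show (0:ℕ)+1 = 1 from rfl, Finset.sum_range_one, pow_zero, one_mul]
          rw [show convPow q 0 n = if n = 0 then (1:ℝ) else 0 from rfl, if_neg (by omega)]
        rw [hZ]
        exact mul_nonneg hBpos.le (hq n)
    | succ K ih =>
        intro n hn
        by_cases hcase : n ≤ n₂
        · calc ZK q δ (K+1) n ≤ (1-δ)⁻¹ := ZK_le hq hqs hqt hδ0 hδ1 _ _
            _ = ((1-δ)⁻¹ / Qmin) * Qmin := by rw [div_mul_cancel₀ _ hQpos.ne']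
            _ ≤ B * q n := by
                apply mul_le_mul (le_max_left _ _) ?_ hQpos.le hBpos.le
                exact Finset.inf'_le q (Finset.mem_Ioc.mpr ⟨hn, hcase⟩)
        · push_neg at hcase
          have hnN₁ : N₁ ≤ n := by
            have h1 : N₁ ≤ n₂ := le_trans (le_max_left _ _) (le_max_left _ _)
            omega
          have hnn₃ : n₃ ≤ n := by
            have h1 : n₃ ≤ n₂ := le_trans (le_max_right _ _) (le_max_left _ _)
            omega
          have hn2m : 2*m + 2 ≤ n := by
            have h1 : 2*m+2 ≤ n₂ := le_max_right _ _
            omega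
          have hshift := hn₃ n hnn₃
          have hmid : ∑ i ∈ Finset.Ioo m (n - m), q i * q (n - i) ≤ ε₀ * q n := by
            calc ∑ i ∈ Finset.Ioo m (n - m), q i * q (n - i)
                ≤ 2 * C * (1 - ∑ i ∈ Finset.range (m+1), q i) * q n :=
                  midsum hq hqs hqt hn2m hC0.le (hq n) (hN₁ n hnN₁)
              _ ≤ ε₀ * q n := mul_le_mul_of_nonneg_right hτ (hq n)
          have hσ : ∑ j ∈ Finset.range (m+1), q j ≤ 1 := by
            have := Summable.sum_le_tsum (Finset.range (m+1)) (fun i _ => hq i) hqs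
            rw [hqt] at this; exact this
          have hconv := convUB (B := B) (S₀ := (1-δ)⁻¹) (εa := ε₀) (εm := ε₀)
            hq (fun i => ZK_nonneg hq hδ0.le K i) (hq n) hε₀.le hBpos.le
            (sumZK_le hq hqs hqt hδ0 hδ1 K m)
            (fun i h1 _ => ih i h1)
            (fun i hi => (hshift i hi).2)
            hmid hσ hn2m
          rw [ZK_rec, if_neg (by omega), zero_add]
          have hcoef : δ * ((1+ε₀) * (1-δ)⁻¹ + B * ε₀ + B * (1+ε₀)) ≤ B := by
            have hBX : 2*X/(1-δ) ≤ B := le_max_right _ _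
            have hXB : X ≤ B * (1-δ)/2 := by
              rw [div_le_iff₀ hδ1'] at hBX
              linarith
            have hδε : δ * ε₀ = (1-δ)/4 := by
              rw [hε₀def]; field_simp
            -- δ(1+ε₀)(1-δ)⁻¹ = X ; δ*B*ε₀ = B(1-δ)/4 ; δ*B*(1+ε₀) = Bδ + B(1-δ)/4
            have hexp : δ * ((1+ε₀) * (1-δ)⁻¹ + B * ε₀ + B * (1+ε₀))
                = X + B * (δ * ε₀) + B * δ + B * (δ * ε₀) := by
              rw [hXdef]; ring
            rw [hexp, hδε]
            nlinarith
          calc δ * ∑ i ∈ Finset.range (n+1), ZK q δ K i * q (n - i)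
              ≤ δ * (((1+ε₀) * (1-δ)⁻¹ + B * ε₀ + B * (1+ε₀)) * q n) :=
                mul_le_mul_of_nonneg_left hconv hδ0.le
            _ = (δ * ((1+ε₀) * (1-δ)⁻¹ + B * ε₀ + B * (1+ε₀))) * q n := by ring
            _ ≤ B * q n := mul_le_mul_of_nonneg_right hcoef (hq n)
  filter_upwards [eventually_gt_atTop m] with n hn
  rw [show Zc q δ n = ZK q δ n n from rfl]
  exact key n n hn


lemma sandwich (hq : ∀ n, 0 ≤ q n) (hq0 : q 0 = 0) (hqs : Summable q) (hqt : ∑' n, q n = 1)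
    (hδ0 : 0 < δ) (hδ1 : δ < 1)
    (hqpos : ∀ᶠ n : ℕ in atTop, 0 < q n)
    (hqratio : ∀ i : ℕ, Tendsto (fun N : ℕ => q (N - i) / q N) atTop (nhds 1))
    {C : ℝ} (hC0 : 0 < C)
    (hCb : ∀ᶠ N : ℕ in atTop, ∀ j, N ≤ 2*j → j ≤ N → q j ≤ C * q N)
    {B : ℝ} (hBpos : 0 < B) (hBev : ∀ᶠ n : ℕ in atTop, Zc q δ n ≤ B * q n) :
    Tendsto (fun n : ℕ => Zc q δ n / q n) atTop
      (nhds (δ * ((1-δ)⁻¹ * (1-δ)⁻¹))) := by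
  have hδ1' : 0 < 1 - δ := by linarith
  have hinv : (1-δ) * (1-δ)⁻¹ = 1 := mul_inv_cancel₀ hδ1'.ne'
  have hinvpos : 0 < (1-δ)⁻¹ := by positivity
  set f : ℕ → ℝ := fun n => Zc q δ n / q n with hfdef
  have hf_ub : ∀ᶠ n : ℕ in atTop, f n ≤ B := by
    filter_upwards [hBev, hqpos] with n h1 h2
    rw [hfdef]
    exact div_le_iff₀ h2 |>.mpr (by linarith [h1])
  have hf_lb : ∀ᶠ n : ℕ in atTop, 0 ≤ f n := by
    filter_upwards [hqpos] with n h2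
    exact div_nonneg (Zc_nonneg hq hδ0.le n) h2.le
  have hbdd : IsBoundedUnder (· ≤ ·) atTop f := isBoundedUnder_of_eventually_le hf_ub
  have hbdd' : IsBoundedUnder (· ≥ ·) atTop f := isBoundedUnder_of_eventually_ge hf_lb
  have hcob : IsCoboundedUnder (· ≤ ·) atTop f := hbdd'.isCoboundedUnder_le
  have hcob' : IsCoboundedUnder (· ≥ ·) atTop f := hbdd.isCoboundedUnder_ge
  set β := limsup f atTop with hβ
  set lam := liminf f atTop with hlam
  have hlamβ : lam ≤ β := liminf_le_limsup hbdd hbdd'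
  have hlam0 : 0 ≤ lam := le_liminf_of_le hcob' hf_lb
  have hβB : β ≤ B := limsup_le_of_le hcob hf_ub
  -- the partial sums of q
  have hσsum : ∀ m : ℕ, ∑ j ∈ Finset.range (m+1), q j ≤ 1 := by
    intro m
    have := Summable.sum_le_tsum (Finset.range (m+1)) (fun i _ => hq i) hqs
    rw [hqt] at this; exact this
  have hσtend : Tendsto (fun m : ℕ => ∑ j ∈ Finset.range (m+1), q j) atTop (nhds 1) := by
    have h := tail_tendsto hq hqs hqt
    have := (tendsto_const_nhds (x := (1:ℝ)) (f := atTop (α := ℕ))).sub h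
    simpa using this
  -- UPPER estimate
  have hup : ∀ ε : ℝ, 0 < ε → ε ≤ 1 →
      β ≤ δ * ((1+ε) * (1-δ)⁻¹ + (β+ε) * ε + (β+ε) * (1+ε)) := by
    intro ε hε hε1
    have hβε : 0 < β + ε := by linarith [le_trans hlam0 hlamβ]
    -- eventually Zc k ≤ (β+ε) q k
    have hev1 : ∀ᶠ k : ℕ in atTop, Zc q δ k ≤ (β+ε) * q k := by
      have h := eventually_lt_of_limsup_lt (show limsup f atTop < β + ε by
        rw [← hβ]; linarith) hbdd
      filter_upwards [h, hqpos] with k h1 h2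
      rw [hfdef] at h1
      have := (div_lt_iff₀ h2).mp h1
      linarith
    obtain ⟨t₁, ht₁⟩ := eventually_atTop.mp hev1
    have htail := (tail_tendsto hq hqs hqt).eventually
      (eventually_le_nhds (show (0:ℝ) < ε/(2*C) by positivity))
    obtain ⟨t₂, ht₂⟩ := eventually_atTop.mp htail
    set m : ℕ := max t₁ t₂ with hm
    have hτ : 2 * C * (1 - ∑ i ∈ Finset.range (m+1), q i) ≤ ε := by
      have hthis := ht₂ m (le_max_right _ _)
      calc 2 * C * (1 - ∑ i ∈ Finset.range (m+1), q i) ≤ 2 * C * (ε/(2*C)) :=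
            mul_le_mul_of_nonneg_left hthis (by positivity)
        _ = ε := by field_simp
    obtain ⟨N₁, hN₁⟩ := eventually_atTop.mp hCb
    have ht₁m : t₁ ≤ m := le_max_left _ _
    have hev2 : ∀ᶠ n : ℕ in atTop, f n ≤ δ * ((1+ε) * (1-δ)⁻¹ + (β+ε) * ε + (β+ε) * (1+ε)) := by
      filter_upwards [qshift hqratio hqpos hε m, eventually_ge_atTop N₁,
        eventually_ge_atTop (2*m+2), hqpos] with n hshift hnN₁ hn2m hqn
      have hmid : ∑ i ∈ Finset.Ioo m (n - m), q i * q (n - i) ≤ ε * q n := by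
        calc ∑ i ∈ Finset.Ioo m (n - m), q i * q (n - i)
            ≤ 2 * C * (1 - ∑ i ∈ Finset.range (m+1), q i) * q n :=
              midsum hq hqs hqt hn2m hC0.le (hq n) (hN₁ n hnN₁)
          _ ≤ ε * q n := mul_le_mul_of_nonneg_right hτ (hq n)
      have hconv := convUB (B := β+ε) (S₀ := (1-δ)⁻¹) (εa := ε) (εm := ε)
        hq (fun i => Zc_nonneg hq hδ0.le i) (hq n) hε.le hβε.le
        (sumZc_le hq hq0 hqs hqt hδ0 hδ1 m)
        (fun i h1 _ => ht₁ i (by omega))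
        (fun i hi => (hshift i hi).2)
        hmid (hσsum m) hn2m
      have hren := Zc_renewal (δ := δ) hq0 (show 1 ≤ n by omega)
      rw [hfdef]
      rw [div_le_iff₀ hqn, hren]
      calc δ * ∑ i ∈ Finset.range (n+1), Zc q δ i * q (n - i)
          ≤ δ * (((1+ε) * (1-δ)⁻¹ + (β+ε) * ε + (β+ε) * (1+ε)) * q n) :=
            mul_le_mul_of_nonneg_left hconv hδ0.le
        _ = δ * ((1+ε) * (1-δ)⁻¹ + (β+ε) * ε + (β+ε) * (1+ε)) * q n := by ring
    exact limsup_le_of_le hcob hev2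
  -- conclude β ≤ δ((1-δ)⁻¹ + β)
  have hβfinal : β ≤ δ * ((1-δ)⁻¹ + β) := by
    set κ : ℝ := δ * ((1-δ)⁻¹ + 2*B + 3) with hκ
    have hκpos : 0 < κ := by positivity
    have hstep : ∀ ε : ℝ, 0 < ε → ε ≤ 1 → β ≤ δ * ((1-δ)⁻¹ + β) + ε * κ := by
      intro ε hε hε1
      have h := hup ε hε hε1
      have hβB' : β ≤ B := hβB
      have p1 : δ*ε*β ≤ δ*ε*B := mul_le_mul_of_nonneg_left hβB' (by positivity)
      have p2 : (δ*ε)*ε ≤ δ*ε := mul_le_of_le_one_right (by positivity) hε1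
      nlinarith [p1, p2]
    apply le_of_forall_pos_le_add
    intro η hη
    have hε : 0 < min 1 (η/κ) := lt_min one_pos (by positivity)
    have := hstep (min 1 (η/κ)) hε (min_le_left _ _)
    have h2 : (min 1 (η/κ)) * κ ≤ η := by
      calc (min 1 (η/κ)) * κ ≤ (η/κ) * κ :=
            mul_le_mul_of_nonneg_right (min_le_right _ _) hκpos.le
        _ = η := by field_simp
    linarith
  have hβA : β ≤ δ * ((1-δ)⁻¹ * (1-δ)⁻¹) := by
    have h3 : (β - δ*β) * (1-δ)⁻¹ ≤ (δ*(1-δ)⁻¹) * (1-δ)⁻¹ :=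
      mul_le_mul_of_nonneg_right (by linarith [hβfinal]) hinvpos.le
    have h4 : (β - δ*β) * (1-δ)⁻¹ = β := by
      calc (β - δ*β)*(1-δ)⁻¹ = β*((1-δ)*(1-δ)⁻¹) := by ring
        _ = β := by rw [hinv, mul_one]
    rw [h4] at h3
    linarith [h3]
  -- LOWER estimate
  have hlo : ∀ ε : ℝ, 0 < ε → ε ≤ 1 →
      δ * ((1-ε) * ((1-δ)⁻¹ - ε) + (max (lam - ε) 0) * (1-ε) * (1-ε)) ≤ lam := by
    intro ε hε hε1
    set M : ℝ := max (lam - ε) 0 with hM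
    have hM0 : 0 ≤ M := le_max_right _ _
    have hevM : ∀ᶠ i : ℕ in atTop, M * q i ≤ Zc q δ i := by
      rcases le_or_gt (lam - ε) 0 with hc | hc
      · have : M = 0 := max_eq_right hc
        rw [this]
        filter_upwards with i
        simpa using Zc_nonneg hq hδ0.le i
      · have hMeq : M = lam - ε := max_eq_left hc.le
        have h := eventually_lt_of_lt_liminf (show lam - ε < liminf f atTop by
          rw [← hlam]; linarith) hbdd'
        filter_upwards [h, hqpos] with k h1 h2
        rw [hfdef] at h1
        rw [hMeq]
        have := (lt_div_iff₀ h2).mp h1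
        linarith
    obtain ⟨t₁, ht₁⟩ := eventually_atTop.mp hevM
    -- choose m with SZ_m ≥ (1-δ)⁻¹ - ε and σ_m ≥ 1 - ε
    have hSZ := (sumZc_tendsto hq hq0 hqs hqt hδ0 hδ1).eventually
      (eventually_gt_nhds (show (1-δ)⁻¹ - ε < (1-δ)⁻¹ by linarith))
    have hσev := hσtend.eventually (eventually_gt_nhds (show 1 - ε < 1 by linarith))
    obtain ⟨m, hm1, hm2, hm3⟩ := (hSZ.and (hσev.and (eventually_ge_atTop t₁))).exists
    have hev2 : ∀ᶠ n : ℕ in atTop,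
        δ * ((1-ε) * ((1-δ)⁻¹ - ε) + M * (1-ε) * (1-ε)) ≤ f n := by
      filter_upwards [qshift hqratio hqpos hε m, eventually_ge_atTop (2*m+2), hqpos]
        with n hshift hn2m hqn
      have hconv := convLB (B' := M) (S₁ := (1-δ)⁻¹ - ε) (σ₀ := 1 - ε)
        hq (fun i => Zc_nonneg hq hδ0.le i) (hq n) hε1 hM0
        (le_of_lt hm1)
        (fun i h1 _ => ht₁ i (by omega))
        (fun i hi => (hshift i hi).1)
        (le_of_lt hm2) hn2m
      have hren := Zc_renewal (δ := δ) hq0 (show 1 ≤ n by omega)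
      rw [hfdef]
      rw [le_div_iff₀ hqn, hren]
      calc δ * ((1-ε) * ((1-δ)⁻¹ - ε) + M * (1-ε) * (1-ε)) * q n
          = δ * ((((1-ε) * ((1-δ)⁻¹ - ε)) + M * (1-ε) * (1-ε)) * q n) := by ring
        _ ≤ δ * ∑ i ∈ Finset.range (n+1), Zc q δ i * q (n - i) :=
            mul_le_mul_of_nonneg_left hconv hδ0.le
    exact le_liminf_of_le hcob' hev2
  have hlamA : δ * ((1-δ)⁻¹ * (1-δ)⁻¹) ≤ lam := by
    set κ' : ℝ := δ * (1 + (1-δ)⁻¹ + 2*B) + 1 with hκ'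
    have hκ'pos : 0 < κ' := by positivity
    have hstep : ∀ ε : ℝ, 0 < ε → ε ≤ 1 → δ * (1-δ)⁻¹ ≤ lam * (1-δ) + ε * κ' := by
      intro ε hε hε1
      have h := hlo ε hε hε1
      have hMlam : lam - ε ≤ max (lam - ε) 0 := le_max_left _ _
      have hMB : max (lam - ε) 0 ≤ B := by
        apply max_le _ hBpos.le
        linarith [le_trans hlamβ hβB]
      have hM0 : (0:ℝ) ≤ max (lam - ε) 0 := le_max_right _ _
      set M : ℝ := max (lam - ε) 0
      have p1 : δ*ε*M ≤ δ*ε*B := mul_le_mul_of_nonneg_left hMB (by positivity)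
      have p2 : (δ*ε)*ε ≤ δ*ε := mul_le_of_le_one_right (by positivity) hε1
      have p4 : δ*(lam-M) ≤ δ*ε := mul_le_mul_of_nonneg_left (by linarith) hδ0.le
      have p5 : δ*ε ≤ ε := by nlinarith
      have p6 : (0:ℝ) ≤ δ*(M*(ε*ε)) := by positivity
      have p7 : (0:ℝ) ≤ δ*(ε*ε) := by positivity
      nlinarith [h, p1, p2, p4, p5, p6, p7]
    have hfin : δ * (1-δ)⁻¹ ≤ lam * (1-δ) := by
      apply le_of_forall_pos_le_add
      intro η hη
      have hε : 0 < min 1 (η/κ') := lt_min one_pos (by positivity)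
      have := hstep (min 1 (η/κ')) hε (min_le_left _ _)
      have h2 : (min 1 (η/κ')) * κ' ≤ η := by
        calc (min 1 (η/κ')) * κ' ≤ (η/κ') * κ' :=
              mul_le_mul_of_nonneg_right (min_le_right _ _) hκ'pos.le
          _ = η := by field_simp
      linarith
    have h3 : (δ*(1-δ)⁻¹) * (1-δ)⁻¹ ≤ (lam * (1-δ)) * (1-δ)⁻¹ :=
      mul_le_mul_of_nonneg_right hfin hinvpos.le
    have h4 : (lam * (1-δ)) * (1-δ)⁻¹ = lam := by
      calc (lam * (1-δ)) * (1-δ)⁻¹ = lam*((1-δ)*(1-δ)⁻¹) := by ring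
        _ = lam := by rw [hinv, mul_one]
    rw [h4] at h3
    linarith [h3]
  have hβeq : β = δ * ((1-δ)⁻¹ * (1-δ)⁻¹) := le_antisymm hβA (le_trans hlamA hlamβ)
  have hlameq : lam = δ * ((1-δ)⁻¹ * (1-δ)⁻¹) := le_antisymm (le_trans hlamβ hβA) hlamA
  exact tendsto_of_liminf_eq_limsup hlameq hβeq hbdd hbdd'


/-- Strictly delocalized regime, constrained case:
for `0 < δ < 1`, `Z^c_{δ,N} ~ (δ c_q/(1−δ)²) · L(N)/N^{3/2}` as `N → ∞`. -/
theorem stmt_3 (L : ℕ → ℝ) (hLpos : ∀ n, 0 < L n) (hL : SlowlyVaryingNat L)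
    (c_q : ℝ) (hcq : 0 < c_q)
    (q : ℕ → ℝ) (hq0 : q 0 = 0) (hqmem : ∀ n, q n ∈ Set.Icc (0 : ℝ) 1)
    (hqsum : ∑' n, q n = 1)
    (hqa : Tendsto (fun n : ℕ => (n : ℝ) ^ ((3 : ℝ) / 2) * q n / L n) atTop (nhds c_q))
    (δ : ℝ) (hδ0 : 0 < δ) (hδ1 : δ < 1) :
    Tendsto (fun N : ℕ =>
        Zc q δ N / (δ * c_q / (1 - δ) ^ 2 * L N / (N : ℝ) ^ ((3 : ℝ) / 2)))
      atTop (nhds 1) := by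
  have hq : ∀ n, 0 ≤ q n := fun n => (hqmem n).1
  have hqs : Summable q := by
    by_contra h
    rw [tsum_eq_zero_of_not_summable h] at hqsum
    norm_num at hqsum
  have hqpos' := qpos hLpos hcq hqa
  have hqratio' := qratio hLpos hL hcq hqa
  obtain ⟨C, hC0, hCb⟩ := qbound hLpos hL hcq hqa
  obtain ⟨B, hBpos, hBev⟩ := bigB hq hq0 hqs hqsum hδ0 hδ1 hqpos' hqratio' hC0 hCb
  have htend := sandwich hq hq0 hqs hqsum hδ0 hδ1 hqpos' hqratio' hC0 hCb hBpos hBev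
  set c : ℝ := δ * c_q / (1 - δ) ^ 2 with hc
  have hδ1' : (0:ℝ) < 1 - δ := by linarith
  have hcpos : 0 < c := by positivity
  have hcomb := (htend.mul hqa).div_const c
  have hlim : δ * ((1-δ)⁻¹ * (1-δ)⁻¹) * c_q / c = 1 := by
    rw [hc]
    field_simp
  rw [hlim] at hcomb
  apply hcomb.congr'
  filter_upwards [hqpos', eventually_ge_atTop 1] with N hqN hN1
  have hNpos : (0:ℝ) < (N:ℝ) := by exact_mod_cast (by omega : 0 < N)
  have hP : (0:ℝ) < (N:ℝ) ^ ((3:ℝ)/2) := Real.rpow_pos_of_pos hNpos _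
  have hLN := hLpos N
  field_simp
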